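/- If z is a T-periodic C² solution of z'' + c·z' + b·d·exp(2z) = a·c + b·f(t), then the L²-norm of z' over one period satisfies ‖z'‖₂ ≤ (b/c)·‖f‖₂, where ‖g‖₂ = (∫₀ᵀ g(t)² dt)^{1/2}. -/

import Mathlib

theorem stmt4 (a b c d T : ℝ) (ha : 0 < a) (hb : 0 < b) (hc : 0 < c) (hd : 0 < d)
    (hT : 0 < T) (f : ℝ → ℝ) (hf : Continuous f) (hfper : Function.Periodic f T)
    (hfmean : ∫ t in (0 : ℝ)..T, f t = 0)
    (z z' z'' : ℝ → ℝ)
    (hz1 : ∀ t, HasDerivAt z (z' t) t)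
    (hz2 : ∀ t, HasDerivAt z' (z'' t) t)
    (hz''cont : Continuous z'')
    (hzper : Function.Periodic z T)
    (heq : ∀ t, z'' t + c * z' t + b * d * Real.exp (2 * z t) = a * c + b * f t) :
    Real.sqrt (∫ t in (0 : ℝ)..T, (z' t) ^ 2)
      ≤ (b / c) * Real.sqrt (∫ t in (0 : ℝ)..T, (f t) ^ 2) := by
  have hzc : Continuous z := continuous_iff_continuousAt.mpr fun t => (hz1 t).continuousAt
  have hz'c : Continuous z' := continuous_iff_continuousAt.mpr fun t => (hz2 t).continuousAt
  have hz'per : z' T = z' 0 := by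
    have h1 : HasDerivAt (fun s => z (s + T)) (z' T) 0 := by
      have := (hz1 (0 + T)).comp 0 ((hasDerivAt_id (0:ℝ)).add_const T)
      simpa [Function.comp_def] using this
    have h2 : (fun s => z (s + T)) = z := funext fun s => hzper s
    rw [h2] at h1
    exact h1.unique (hz1 0)
  have hzT : z T = z 0 := by simpa using hzper 0
  have i1 : IntervalIntegrable (fun t => z'' t * z' t) MeasureTheory.volume 0 T :=
    (hz''cont.mul hz'c).intervalIntegrable 0 T
  have i2 : IntervalIntegrable (fun t => c * (z' t) ^ 2) MeasureTheory.volume 0 T :=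
    (continuous_const.mul (hz'c.pow 2)).intervalIntegrable 0 T
  have i3 : IntervalIntegrable (fun t => b * d * (Real.exp (2 * z t) * z' t))
      MeasureTheory.volume 0 T :=
    (continuous_const.mul
      ((Real.continuous_exp.comp (continuous_const.mul hzc)).mul hz'c)).intervalIntegrable 0 T
  have i4 : IntervalIntegrable (fun t => f t * z' t) MeasureTheory.volume 0 T :=
    (hf.mul hz'c).intervalIntegrable 0 T
  have hI1 : ∫ t in (0:ℝ)..T, z' t = 0 := by
    rw [intervalIntegral.integral_eq_sub_of_hasDerivAt (fun t _ => hz1 t)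
      (hz'c.intervalIntegrable 0 T), hzT]
    ring
  have hI2 : ∫ t in (0:ℝ)..T, z'' t * z' t = 0 := by
    have hderiv : ∀ t ∈ Set.uIcc (0:ℝ) T,
        HasDerivAt (fun t => z' t ^ 2 / 2) (z'' t * z' t) t := by
      intro t _
      have := ((hz2 t).pow 2).div_const 2
      exact this.congr_deriv (by norm_num <;> ring)
    rw [intervalIntegral.integral_eq_sub_of_hasDerivAt hderiv i1, hz'per]
    ring
  have hI3 : ∫ t in (0:ℝ)..T, Real.exp (2 * z t) * z' t = 0 := by
    have hderiv : ∀ t ∈ Set.uIcc (0:ℝ) T,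
        HasDerivAt (fun t => Real.exp (2 * z t) / 2) (Real.exp (2 * z t) * z' t) t := by
      intro t _
      have := (((hz1 t).const_mul 2).exp).div_const 2
      exact this.congr_deriv (by norm_num <;> ring)
    rw [intervalIntegral.integral_eq_sub_of_hasDerivAt hderiv
      (((Real.continuous_exp.comp (continuous_const.mul hzc)).mul hz'c).intervalIntegrable 0 T),
      hzT]
    ring
  set I := ∫ t in (0:ℝ)..T, (z' t) ^ 2 with hIdef
  set K := ∫ t in (0:ℝ)..T, (f t) ^ 2 with hKdef
  set J := ∫ t in (0:ℝ)..T, f t * z' t with hJdef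
  have hkey : c * I = b * J := by
    have hpt : ∀ t, z'' t * z' t + c * (z' t) ^ 2 + b * d * (Real.exp (2 * z t) * z' t)
        = a * c * z' t + b * (f t * z' t) := by
      intro t
      linear_combination (z' t) * (heq t)
    have hL : (∫ t in (0:ℝ)..T,
        (z'' t * z' t + c * (z' t) ^ 2 + b * d * (Real.exp (2 * z t) * z' t)))
        = (∫ t in (0:ℝ)..T, (a * c * z' t + b * (f t * z' t))) := by
      apply intervalIntegral.integral_congr
      intro t _
      exact hpt t
    rw [intervalIntegral.integral_add (i1.add i2) i3, intervalIntegral.integral_add i1 i2,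
      intervalIntegral.integral_add (Continuous.intervalIntegrable (u := fun t => a * c * z' t) (continuous_const.mul hz'c) 0 T)
        (Continuous.intervalIntegrable (u := fun t => b * (f t * z' t)) (continuous_const.mul (hf.mul hz'c)) 0 T),
      intervalIntegral.integral_const_mul, intervalIntegral.integral_const_mul,
      intervalIntegral.integral_const_mul, intervalIntegral.integral_const_mul,
      hI1, hI2, hI3] at hL
    simpa using hL
  have hInn : 0 ≤ I := intervalIntegral.integral_nonneg hT.le fun t _ => sq_nonneg _
  have hKnn : 0 ≤ K := intervalIntegral.integral_nonneg hT.le fun t _ => sq_nonneg _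
  have hCS : J ^ 2 ≤ I * K := by
    have hq : 0 ≤ ∫ t in (0:ℝ)..T, (I * f t - J * z' t) ^ 2 :=
      intervalIntegral.integral_nonneg hT.le fun t _ => sq_nonneg _
    have hexp : (∫ t in (0:ℝ)..T, (I * f t - J * z' t) ^ 2)
        = I ^ 2 * K - 2 * I * J * J + J ^ 2 * I := by
      have hpt : ∀ t, (I * f t - J * z' t) ^ 2
          = I ^ 2 * (f t) ^ 2 - 2 * I * J * (f t * z' t) + J ^ 2 * (z' t) ^ 2 := by
        intro t; ring
      rw [intervalIntegral.integral_congr (g := fun t =>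
        I ^ 2 * (f t) ^ 2 - 2 * I * J * (f t * z' t) + J ^ 2 * (z' t) ^ 2)
        (fun t _ => hpt t)]
      rw [intervalIntegral.integral_add
        ((Continuous.intervalIntegrable (u := fun t => I ^ 2 * (f t) ^ 2) (continuous_const.mul (hf.pow 2)) 0 T).sub
          (Continuous.intervalIntegrable (u := fun t => 2 * I * J * (f t * z' t)) (continuous_const.mul (hf.mul hz'c)) 0 T))
        (Continuous.intervalIntegrable (u := fun t => J ^ 2 * (z' t) ^ 2) (continuous_const.mul (hz'c.pow 2)) 0 T),
        intervalIntegral.integral_sub (Continuous.intervalIntegrable (u := fun t => I ^ 2 * (f t) ^ 2) (continuous_const.mul (hf.pow 2)) 0 T)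
          (Continuous.intervalIntegrable (u := fun t => 2 * I * J * (f t * z' t)) (continuous_const.mul (hf.mul hz'c)) 0 T),
        intervalIntegral.integral_const_mul, intervalIntegral.integral_const_mul,
        intervalIntegral.integral_const_mul]
    rw [hexp] at hq
    rcases eq_or_lt_of_le hInn with h0 | hpos
    · have hJ0 : J = 0 := by
        have : b * J = 0 := by rw [← hkey, ← h0]; ring
        exact (mul_eq_zero.mp this).resolve_left hb.ne'
      rw [hJ0, ← h0]; simp
    · nlinarith
  have hfin : c ^ 2 * I ≤ b ^ 2 * K := by
    rcases eq_or_lt_of_le hInn with h0 | hpos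
    · nlinarith [hKnn]
    · have h2 : (c * I) ^ 2 = (b * J) ^ 2 := by rw [hkey]
      have h3 : b ^ 2 * J ^ 2 ≤ b ^ 2 * (I * K) := mul_le_mul_of_nonneg_left hCS (sq_nonneg b)
      have h4 : c ^ 2 * I * I ≤ b ^ 2 * K * I := by nlinarith [h2, h3]
      exact le_of_mul_le_mul_right h4 hpos
  have h1 : Real.sqrt (c ^ 2 * I) ≤ Real.sqrt (b ^ 2 * K) := Real.sqrt_le_sqrt hfin
  rw [Real.sqrt_mul (sq_nonneg c), Real.sqrt_mul (sq_nonneg b),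
    Real.sqrt_sq hc.le, Real.sqrt_sq hb.le] at h1
  rw [div_mul_eq_mul_div, le_div_iff₀ hc]
  linarith
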